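/- Let p, q ∈ ℕ and set n = p + q. For a subset A ⊆ Fin n with exactly p elements, let ι_A : Fin p → Fin n and ι_{Aᶜ} : Fin q → Fin n denote the unique strictly increasing enumerations of A and of its complement. Then the map sending a pair (A, u) — where A ⊆ Fin n has p elements and u : Fin n → ℝ is strictly decreasing with all values in the open interval (0,1) — to the pair (u ∘ ι_A, u ∘ ι_{Aᶜ}) is a bijection onto the set of pairs (v, w) with v : Fin p → (0,1) strictly decreasing, w : Fin q → (0,1) strictly decreasing, and v(i) ≠ w(j) for all i, j. Moreover, the set of pairs (v, w) ∈ ℝᵖ × ℝᵠ such that v(i) = w(j) for some i, j has Lebesgue measure zero. -/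
import Mathlib


open Set

/-- The shuffle map: a pair `(A, u)` of a `p`-element subset `A` of `Fin (p+q)` and a
tuple `u` is sent to `(u ∘ ι_A, u ∘ ι_{Aᶜ})`, where `ι_A` and `ι_{Aᶜ}` are the strictly
increasing enumerations of `A` and its complement (junk values if the cardinalities are
wrong). -/
noncomputable def shuffleSplit (p q : ℕ)
    (Au : Finset (Fin (p + q)) × (Fin (p + q) → ℝ)) : (Fin p → ℝ) × (Fin q → ℝ) :=
  (if h : Au.1.card = p then fun i => Au.2 (Au.1.orderEmbOfFin h i) else 0,
   if h : Au.1ᶜ.card = q then fun j => Au.2 (Au.1ᶜ.orderEmbOfFin h j) else 0)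

/-- Two strictly decreasing tuples with the same range are equal. -/
lemma strictAnti_eq_of_range_eq {n : ℕ} {f g : Fin n → ℝ} (hf : StrictAnti f)
    (hg : StrictAnti g) (h : Set.range f = Set.range g) : f = g := by
  have hfm : StrictMono (f ∘ Fin.rev) := hf.comp fun a b => Fin.rev_lt_rev.mpr
  have hgm : StrictMono (g ∘ Fin.rev) := hg.comp fun a b => Fin.rev_lt_rev.mpr
  set s : Finset ℝ := Finset.image f Finset.univ with hs
  have hcard : s.card = n := by
    rw [hs, Finset.card_image_of_injective _ hf.injective, Finset.card_univ, Fintype.card_fin]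
  have hmemf : ∀ x, (f ∘ Fin.rev) x ∈ s := fun x => Finset.mem_image_of_mem _ (Finset.mem_univ _)
  have hrange : (s : Set ℝ) = Set.range g := by
    rw [hs, Finset.coe_image, Finset.coe_univ, Set.image_univ, h]
  have hmemg : ∀ x, (g ∘ Fin.rev) x ∈ s := by
    intro x
    have : (g ∘ Fin.rev) x ∈ (s : Set ℝ) := hrange ▸ Set.mem_range_self _
    exact_mod_cast this
  have := (Finset.orderEmbOfFin_unique hcard hmemf hfm).trans
    (Finset.orderEmbOfFin_unique hcard hmemg hgm).symm
  funext k
  have := congrFun this (Fin.rev k)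
  simpa using this

/-- The range of a finset as the universal image. -/
lemma range_eq_coe_image {n : ℕ} (f : Fin n → ℝ) :
    Set.range f = ↑(Finset.image f Finset.univ) := by
  rw [Finset.coe_image, Finset.coe_univ, Set.image_univ]

lemma image_comp_orderEmbOfFin {n p : ℕ} (u : Fin n → ℝ) (A : Finset (Fin n))
    (h : A.card = p) :
    Finset.image (fun i => u (A.orderEmbOfFin h i)) Finset.univ = Finset.image u A := by
  rw [show (fun i => u (A.orderEmbOfFin h i)) = u ∘ (A.orderEmbOfFin h) from rfl,
    ← Finset.image_image]
  congr 1
  apply Finset.coe_injective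
  rw [Finset.coe_image, Finset.coe_univ, Set.image_univ, Finset.range_orderEmbOfFin]

/-- The shuffle map is a bijection from the set of pairs `(A, u)` — with
`A ⊆ Fin (p+q)` of cardinality `p` and `u` strictly decreasing with values in `(0,1)` —
onto the set of pairs `(v, w)` of strictly decreasing tuples with values in `(0,1)` having
no common value.  Moreover, the set of pairs `(v, w)` sharing some value has Lebesgue
measure zero. -/
theorem shuffleSplit_bijOn (p q : ℕ) :
    Set.BijOn (shuffleSplit p q)
      {Au : Finset (Fin (p + q)) × (Fin (p + q) → ℝ) |
        Au.1.card = p ∧ StrictAnti Au.2 ∧ ∀ k, Au.2 k ∈ Ioo (0 : ℝ) 1}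
      {vw : (Fin p → ℝ) × (Fin q → ℝ) |
        StrictAnti vw.1 ∧ StrictAnti vw.2 ∧ (∀ i, vw.1 i ∈ Ioo (0 : ℝ) 1) ∧
        (∀ j, vw.2 j ∈ Ioo (0 : ℝ) 1) ∧ ∀ i j, vw.1 i ≠ vw.2 j} ∧
    MeasureTheory.volume
      {vw : (Fin p → ℝ) × (Fin q → ℝ) | ∃ i j, vw.1 i = vw.2 j} = 0 := by
  have hcompl : ∀ A : Finset (Fin (p + q)), A.card = p → Aᶜ.card = q := by
    intro A hA
    rw [Finset.card_compl, hA, Fintype.card_fin]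
    omega
  have hsplit : ∀ (A : Finset (Fin (p + q))) (u : Fin (p + q) → ℝ) (hA : A.card = p),
      shuffleSplit p q (A, u) =
        ((fun i => u (A.orderEmbOfFin hA i)),
         (fun j => u (Aᶜ.orderEmbOfFin (hcompl A hA) j))) := by
    intro A u hA
    simp only [shuffleSplit, dif_pos hA, dif_pos (hcompl A hA)]
  constructor
  · refine ⟨?_, ?_, ?_⟩
    · -- MapsTo
      rintro ⟨A, u⟩ ⟨hA, hu, hmem⟩
      rw [Set.mem_setOf_eq, hsplit A u hA]
      refine ⟨hu.comp_strictMono (A.orderEmbOfFin hA).strictMono,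
        hu.comp_strictMono (Aᶜ.orderEmbOfFin (hcompl A hA)).strictMono,
        fun i => hmem _, fun j => hmem _, ?_⟩
      intro i j hij
      have h1 := A.orderEmbOfFin_mem hA i
      have h2 := Aᶜ.orderEmbOfFin_mem (hcompl A hA) j
      have := hu.injective hij
      rw [this] at h1
      exact (Finset.mem_compl.mp h2) h1
    · -- InjOn
      rintro ⟨A, u⟩ ⟨hA, hu, humem⟩ ⟨B, u'⟩ ⟨hB, hu', hu'mem⟩ heq
      rw [hsplit A u hA, hsplit B u' hB, Prod.mk.injEq] at heq
      obtain ⟨h1, h2⟩ := heq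
      -- images of u over A, Aᶜ
      have himA : Finset.image u A = Finset.image u' B := by
        rw [← image_comp_orderEmbOfFin u A hA, ← image_comp_orderEmbOfFin u' B hB, h1]
      have himAc : Finset.image u Aᶜ = Finset.image u' Bᶜ := by
        rw [← image_comp_orderEmbOfFin u Aᶜ (hcompl A hA),
          ← image_comp_orderEmbOfFin u' Bᶜ (hcompl B hB), h2]
      have huu' : u = u' := by
        apply strictAnti_eq_of_range_eq hu hu'
        rw [range_eq_coe_image, range_eq_coe_image]
        have e1 : Finset.image u Finset.univ = Finset.image u A ∪ Finset.image u Aᶜ := by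
          rw [← Finset.image_union, Finset.union_compl]
        have e2 : Finset.image u' Finset.univ = Finset.image u' B ∪ Finset.image u' Bᶜ := by
          rw [← Finset.image_union, Finset.union_compl]
        rw [e1, e2, himA, himAc]
      have hAB : A = B := by
        ext k
        have key : ∀ (C : Finset (Fin (p + q))) (f : Fin (p + q) → ℝ), Function.Injective f →
            (k ∈ C ↔ f k ∈ Finset.image f C) := by
          intro C f hf
          constructor
          · exact fun hk => Finset.mem_image_of_mem f hk
          · intro hk
            obtain ⟨m, hm, hmk⟩ := Finset.mem_image.mp hk
            rwa [← hf hmk]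
        rw [key A u hu.injective, key B u' hu'.injective, himA, huu']
      rw [Prod.mk.injEq]
      exact ⟨hAB, huu'⟩
    · -- SurjOn
      rintro ⟨v, w⟩ ⟨hv, hw, hvmem, hwmem, hvw⟩
      classical
      set Tv : Finset ℝ := Finset.image v Finset.univ with hTv
      set Tw : Finset ℝ := Finset.image w Finset.univ with hTw
      have hdisj : Disjoint Tv Tw := by
        rw [Finset.disjoint_left]
        rintro x hx hx'
        obtain ⟨i, -, hi⟩ := Finset.mem_image.mp hx
        obtain ⟨j, -, hj⟩ := Finset.mem_image.mp hx'
        exact hvw i j (hi.trans hj.symm)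
      set T : Finset ℝ := Tv ∪ Tw with hT
      have hTcard : T.card = p + q := by
        rw [hT, Finset.card_union_of_disjoint hdisj, hTv, hTw,
          Finset.card_image_of_injective _ hv.injective,
          Finset.card_image_of_injective _ hw.injective,
          Finset.card_univ, Finset.card_univ, Fintype.card_fin, Fintype.card_fin]
      set u : Fin (p + q) → ℝ := fun k => T.orderEmbOfFin hTcard (Fin.rev k) with hudef
      have hu : StrictAnti u :=
        (T.orderEmbOfFin hTcard).strictMono.comp_strictAnti fun a b => Fin.rev_lt_rev.mpr
      have humem : ∀ k, u k ∈ Ioo (0 : ℝ) 1 := by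
        intro k
        have : u k ∈ T := T.orderEmbOfFin_mem hTcard _
        rcases Finset.mem_union.mp this with h | h
        · obtain ⟨i, -, hi⟩ := Finset.mem_image.mp h
          exact hi ▸ hvmem i
        · obtain ⟨j, -, hj⟩ := Finset.mem_image.mp h
          exact hj ▸ hwmem j
      have hrangeu : Finset.image u Finset.univ = T := by
        apply Finset.coe_injective
        rw [← range_eq_coe_image, hudef]
        have : Set.range (fun k => T.orderEmbOfFin hTcard (Fin.rev k)) =
            Set.range (T.orderEmbOfFin hTcard) := by
          rw [show (fun k => T.orderEmbOfFin hTcard (Fin.rev k)) =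
            (T.orderEmbOfFin hTcard) ∘ Fin.rev from rfl, Set.range_comp,
            Set.range_eq_univ.mpr Fin.rev_surjective, Set.image_univ]
        rw [this, Finset.range_orderEmbOfFin]
      set A : Finset (Fin (p + q)) := Finset.univ.filter (fun k => u k ∈ Tv) with hAdef
      have huT : ∀ k, u k ∈ T := fun k => by
        rw [← hrangeu]; exact Finset.mem_image_of_mem _ (Finset.mem_univ _)
      have himA : Finset.image u A = Tv := by
        ext x
        constructor
        · intro hx
          obtain ⟨k, hk, hkx⟩ := Finset.mem_image.mp hx
          exact hkx ▸ (Finset.mem_filter.mp hk).2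
        · intro hx
          have hxT : x ∈ T := Finset.mem_union_left _ hx
          rw [← hrangeu] at hxT
          obtain ⟨k, -, hkx⟩ := Finset.mem_image.mp hxT
          exact Finset.mem_image.mpr ⟨k, Finset.mem_filter.mpr ⟨Finset.mem_univ _, hkx ▸ hx⟩, hkx⟩
      have himAc : Finset.image u Aᶜ = Tw := by
        ext x
        constructor
        · intro hx
          obtain ⟨k, hk, hkx⟩ := Finset.mem_image.mp hx
          have : u k ∉ Tv := by
            rw [Finset.mem_compl, hAdef, Finset.mem_filter] at hk
            exact fun h => hk ⟨Finset.mem_univ _, h⟩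
          rcases Finset.mem_union.mp (huT k) with h | h
          · exact absurd h this
          · exact hkx ▸ h
        · intro hx
          have hxT : x ∈ T := Finset.mem_union_right _ hx
          rw [← hrangeu] at hxT
          obtain ⟨k, -, hkx⟩ := Finset.mem_image.mp hxT
          refine Finset.mem_image.mpr ⟨k, ?_, hkx⟩
          rw [Finset.mem_compl, hAdef, Finset.mem_filter]
          rintro ⟨-, hk⟩
          exact Finset.disjoint_left.mp hdisj hk (hkx ▸ hx)
      have hAcard : A.card = p := by
        rw [← Finset.card_image_of_injective A hu.injective, himA, hTv,
          Finset.card_image_of_injective _ hv.injective, Finset.card_univ, Fintype.card_fin]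
      refine ⟨(A, u), ⟨hAcard, hu, humem⟩, ?_⟩
      rw [hsplit A u hAcard, Prod.mk.injEq]
      constructor
      · apply strictAnti_eq_of_range_eq (hu.comp_strictMono (A.orderEmbOfFin hAcard).strictMono) hv
        rw [range_eq_coe_image, range_eq_coe_image]
        simp only [Function.comp_def]
        rw [image_comp_orderEmbOfFin, himA]
      · apply strictAnti_eq_of_range_eq
          (hu.comp_strictMono (Aᶜ.orderEmbOfFin (hcompl A hAcard)).strictMono) hw
        rw [range_eq_coe_image, range_eq_coe_image]
        simp only [Function.comp_def]
        rw [image_comp_orderEmbOfFin, himAc]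
  · -- measure zero
    have hsub : {vw : (Fin p → ℝ) × (Fin q → ℝ) | ∃ i j, vw.1 i = vw.2 j} =
        ⋃ i, ⋃ j, {vw : (Fin p → ℝ) × (Fin q → ℝ) | vw.1 i = vw.2 j} := by
      ext vw; simp
    rw [hsub]
    refine MeasureTheory.measure_iUnion_null fun i =>
      MeasureTheory.measure_iUnion_null fun j => ?_
    set f : ((Fin p → ℝ) × (Fin q → ℝ)) →ₗ[ℝ] ℝ :=
      { toFun := fun x => x.1 i - x.2 j,
        map_add' := by intros; simp; ring,
        map_smul' := by intros; simp; ring }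
    have hker : {vw : (Fin p → ℝ) × (Fin q → ℝ) | vw.1 i = vw.2 j} =
        (LinearMap.ker f : Set _) := by
      ext x; simp [f, sub_eq_zero, LinearMap.mem_ker]
    rw [hker]
    haveI : (MeasureTheory.volume :
        MeasureTheory.Measure ((Fin p → ℝ) × (Fin q → ℝ))).IsAddHaarMeasure :=
      MeasureTheory.Measure.prod.instIsAddHaarMeasure _ _
    apply MeasureTheory.Measure.addHaar_submodule
    intro h
    have h1 : f (fun _ => 1, 0) = 0 := by
      have : ((fun _ => 1, 0) : (Fin p → ℝ) × (Fin q → ℝ)) ∈ LinearMap.ker f :=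
        h ▸ Submodule.mem_top
      simpa [LinearMap.mem_ker] using this
    simp [f] at h1
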